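/- For w ∈ [0,1/3], 2(1−w)cos(πw) + (2/(3π))sin(3πw) ≥ 2 − π²w² − 2π²w³, and consequently 2 − |ψ(w)| ≥ π²w² where ψ(w) = (1−w)(e^{−2πiw}+e^{−4πiw}) + (1/(3πi))(1−e^{−6πiw}). -/

import Mathlib

open Real

/-- The Fourier transform of the localizing function `φ` on `[0,1]`. -/
noncomputable def psi (w : ℝ) : ℂ :=
  (1 - (w : ℂ)) * (Complex.exp (-2 * (π : ℂ) * Complex.I * (w : ℂ)) +
      Complex.exp (-4 * (π : ℂ) * Complex.I * (w : ℂ))) +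
    (1 / (3 * (π : ℂ) * Complex.I)) * (1 - Complex.exp (-6 * (π : ℂ) * Complex.I * (w : ℂ)))

lemma sin_ge_cubic (x : ℝ) (hx : 0 ≤ x) : x - x ^ 3 / 6 ≤ Real.sin x := by
  have mono : MonotoneOn (fun y : ℝ => Real.sin y - y + y ^ 3 / 6) (Set.Ici 0) := by
    apply monotoneOn_of_deriv_nonneg (convex_Ici 0)
    · fun_prop
    · intro y hy
      apply DifferentiableAt.differentiableWithinAt
      fun_prop
    · intro y hy
      have hd : HasDerivAt (fun y : ℝ => Real.sin y - y + y ^ 3 / 6)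
          (Real.cos y - 1 + 3 * y ^ 2 / 6) y := by
        have : HasDerivAt (fun y : ℝ => Real.sin y - y + y ^ 3 / 6) _ y := ((Real.hasDerivAt_sin y).sub (hasDerivAt_id y)).add
          (((hasDerivAt_pow 3 y)).div_const 6)
        simpa using this
      rw [hd.deriv]
      have := Real.one_sub_sq_div_two_le_cos (x := y)
      nlinarith
  have h0 : (0:ℝ) ∈ Set.Ici (0:ℝ) := Set.mem_Ici.2 le_rfl
  have := mono h0 (Set.mem_Ici.2 hx) hx
  simp at this
  nlinarith

lemma cos_le_quartic (x : ℝ) (hx : 0 ≤ x) : Real.cos x ≤ 1 - x ^ 2 / 2 + x ^ 4 / 24 := by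
  have mono : MonotoneOn (fun y : ℝ => 1 - y ^ 2 / 2 + y ^ 4 / 24 - Real.cos y) (Set.Ici 0) := by
    apply monotoneOn_of_deriv_nonneg (convex_Ici 0)
    · fun_prop
    · intro y hy
      apply DifferentiableAt.differentiableWithinAt
      fun_prop
    · intro y hy
      have hd : HasDerivAt (fun y : ℝ => 1 - y ^ 2 / 2 + y ^ 4 / 24 - Real.cos y)
          (0 - 2 * y / 2 + 4 * y ^ 3 / 24 - (-Real.sin y)) y := by
        have : HasDerivAt (fun y : ℝ => 1 - y ^ 2 / 2 + y ^ 4 / 24 - Real.cos y) _ y := (((hasDerivAt_const y (1:ℝ)).sub ((hasDerivAt_pow 2 y).div_const 2)).add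
          ((hasDerivAt_pow 4 y).div_const 24)).sub (Real.hasDerivAt_cos y)
        simpa using this
      rw [hd.deriv]
      have hy0 : (0:ℝ) ≤ y := by
        rcases (interior_Ici (a := (0:ℝ)) ▸ hy) with h; exact le_of_lt h
      have := sin_ge_cubic y hy0
      nlinarith
  have h0 : (0:ℝ) ∈ Set.Ici (0:ℝ) := Set.mem_Ici.2 le_rfl
  have := mono h0 (Set.mem_Ici.2 hx) hx
  simp at this
  nlinarith

lemma sin_le_quintic (x : ℝ) (hx : 0 ≤ x) : Real.sin x ≤ x - x ^ 3 / 6 + x ^ 5 / 120 := by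
  have mono : MonotoneOn (fun y : ℝ => y - y ^ 3 / 6 + y ^ 5 / 120 - Real.sin y) (Set.Ici 0) := by
    apply monotoneOn_of_deriv_nonneg (convex_Ici 0)
    · fun_prop
    · intro y hy
      apply DifferentiableAt.differentiableWithinAt
      fun_prop
    · intro y hy
      have hd : HasDerivAt (fun y : ℝ => y - y ^ 3 / 6 + y ^ 5 / 120 - Real.sin y)
          (1 - 3 * y ^ 2 / 6 + 5 * y ^ 4 / 120 - Real.cos y) y := by
        have : HasDerivAt (fun y : ℝ => y - y ^ 3 / 6 + y ^ 5 / 120 - Real.sin y) _ y := (((hasDerivAt_id y).sub ((hasDerivAt_pow 3 y).div_const 6)).add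
          ((hasDerivAt_pow 5 y).div_const 120)).sub (Real.hasDerivAt_sin y)
        simpa using this
      rw [hd.deriv]
      have hy0 : (0:ℝ) ≤ y := by
        rcases (interior_Ici (a := (0:ℝ)) ▸ hy) with h; exact le_of_lt h
      have := cos_le_quartic y hy0
      nlinarith
  have h0 : (0:ℝ) ∈ Set.Ici (0:ℝ) := Set.mem_Ici.2 le_rfl
  have := mono h0 (Set.mem_Ici.2 hx) hx
  simp at this
  nlinarith

lemma psi_eq (w : ℝ) : psi w =
    ((2 * (1 - w) * Real.cos (π * w) + (2 / (3 * π)) * Real.sin (3 * π * w) : ℝ) : ℂ) *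
      Complex.exp (-3 * (π : ℂ) * Complex.I * w) := by
  have hπ : (π : ℂ) ≠ 0 := by exact_mod_cast Real.pi_ne_zero
  set E : ℂ := Complex.exp (-(π : ℂ) * Complex.I * w) with hEdef
  have hE : E ≠ 0 := Complex.exp_ne_zero _
  have hpow : ∀ n : ℕ, Complex.exp (-(n : ℂ) * (π : ℂ) * Complex.I * w) = E ^ n := by
    intro n
    rw [hEdef, ← Complex.exp_nat_mul]
    congr 1; ring
  have h2 := hpow 2; have h4 := hpow 4; have h6 := hpow 6; have h3 := hpow 3
  push_cast at h2 h4 h6 h3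
  have hm : Complex.exp (-((π:ℂ) * w) * Complex.I) = E := by
    rw [hEdef]; congr 1; ring
  have hp : Complex.exp ((π:ℂ) * w * Complex.I) = E⁻¹ := by
    rw [← Complex.exp_neg]; congr 1; ring
  have hm3 : Complex.exp (-(3 * (π:ℂ) * w) * Complex.I) = E ^ 3 := by
    rw [← h3]; congr 1; ring
  have hp3 : Complex.exp (3 * (π:ℂ) * w * Complex.I) = (E ^ 3)⁻¹ := by
    rw [← h3, ← Complex.exp_neg]; congr 1; ring
  rw [psi]
  push_cast [Complex.ofReal_cos, Complex.ofReal_sin]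
  rw [Complex.cos, Complex.sin, hm, hp, hm3, hp3, h2, h4, h6,
    show (-3 : ℂ) * π * Complex.I * w = -(3:ℂ) * π * Complex.I * w by ring, h3]
  field_simp [hπ, hE, Complex.I_ne_zero]
  ring_nf
  simp only [Complex.I_sq]
  ring

set_option maxHeartbeats 1000000 in
theorem psi_lower_bound (w : ℝ) (hw : w ∈ Set.Icc (0 : ℝ) (1 / 3)) :
    2 * (1 - w) * Real.cos (π * w) + (2 / (3 * π)) * Real.sin (3 * π * w) ≥
        2 - π ^ 2 * w ^ 2 - 2 * π ^ 2 * w ^ 3 ∧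
      2 - ‖psi w‖ ≥ π ^ 2 * w ^ 2 := by
  obtain ⟨hw0, hw13⟩ := hw
  have hπ0 : 0 < π := Real.pi_pos
  have hπl : π < 3.15 := Real.pi_lt_d2
  have hπg : 3.141592 < π := Real.pi_gt_d6
  have hx0 : 0 ≤ π * w := by positivity
  have hx30 : 0 ≤ 3 * π * w := by positivity
  -- lower bound on A
  have hcosl : 1 - (π * w) ^ 2 / 2 ≤ Real.cos (π * w) := Real.one_sub_sq_div_two_le_cos
  have hsinl : 3 * π * w - (3 * π * w) ^ 3 / 6 ≤ Real.sin (3 * π * w) := sin_ge_cubic _ hx30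
  have h1w : 0 ≤ 1 - w := by linarith
  have hA_lb : 2 * (1 - w) * Real.cos (π * w) + (2 / (3 * π)) * Real.sin (3 * π * w) ≥
      2 - π ^ 2 * w ^ 2 - 2 * π ^ 2 * w ^ 3 := by
    have h1 : 2 * (1 - w) * (1 - (π * w) ^ 2 / 2) ≤ 2 * (1 - w) * Real.cos (π * w) :=
      mul_le_mul_of_nonneg_left hcosl (by linarith)
    have h2 : (2 / (3 * π)) * (3 * π * w - (3 * π * w) ^ 3 / 6) ≤
        (2 / (3 * π)) * Real.sin (3 * π * w) :=
      mul_le_mul_of_nonneg_left hsinl (by positivity)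
    have e2 : (2 / (3 * π)) * (3 * π * w - (3 * π * w) ^ 3 / 6) = 2 * w - 3 * π ^ 2 * w ^ 3 := by
      field_simp; ring
    rw [e2] at h2
    nlinarith [h1, h2]
  refine ⟨hA_lb, ?_⟩
  -- upper bound on A
  have hcosu : Real.cos (π * w) ≤ 1 - (π * w) ^ 2 / 2 + (π * w) ^ 4 / 24 :=
    cos_le_quartic _ hx0
  have hA_ub : 2 * (1 - w) * Real.cos (π * w) + (2 / (3 * π)) * Real.sin (3 * π * w) ≤
      2 - π ^ 2 * w ^ 2 := by
    have h1 : 2 * (1 - w) * Real.cos (π * w) ≤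
        2 * (1 - w) * (1 - (π * w) ^ 2 / 2 + (π * w) ^ 4 / 24) :=
      mul_le_mul_of_nonneg_left hcosu (by linarith)
    have hsinu : Real.sin (3 * π * w) ≤
        3 * π * w - (3 * π * w) ^ 3 / 6 + (3 * π * w) ^ 5 / 120 := sin_le_quintic _ hx30
    have h2 : (2 / (3 * π)) * Real.sin (3 * π * w) ≤
        (2 / (3 * π)) * (3 * π * w - (3 * π * w) ^ 3 / 6 + (3 * π * w) ^ 5 / 120) :=
      mul_le_mul_of_nonneg_left hsinu (by positivity)
    have e2 : (2 / (3 * π)) * (3 * π * w - (3 * π * w) ^ 3 / 6 + (3 * π * w) ^ 5 / 120) =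
        2 * w - 3 * π ^ 2 * w ^ 3 + (27 / 20) * π ^ 4 * w ^ 5 := by
      field_simp; ring
    rw [e2] at h2
    have hπ2 : π ^ 2 < 9.9225 := by nlinarith
    have hkey : π ^ 2 * w / 12 + (19 / 15) * (π ^ 2 * w ^ 2) ≤ 2 := by nlinarith
    have hw3 : (0:ℝ) ≤ π ^ 2 * w ^ 3 := by positivity
    have hmain := mul_le_mul_of_nonneg_left hkey hw3
    nlinarith [h1, h2, hmain]
  -- conclude
  have hπ2' : π ^ 2 < 9.9225 := by nlinarith
  have habs : |2 * (1 - w) * Real.cos (π * w) + (2 / (3 * π)) * Real.sin (3 * π * w)| ≤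
      2 - π ^ 2 * w ^ 2 := by
    rw [abs_le]
    constructor
    · nlinarith [hA_lb, sq_nonneg w, mul_nonneg (mul_nonneg hw0 hw0) hw0, hπ2']
    · exact hA_ub
  have hexp1 : ‖(Complex.exp (-3 * (π : ℂ) * Complex.I * w))‖ = 1 := by
    rw [show -3 * (π : ℂ) * Complex.I * w = ((-3 * π * w : ℝ) : ℂ) * Complex.I by
      push_cast; ring, Complex.norm_exp_ofReal_mul_I]
  rw [psi_eq w, norm_mul, hexp1, mul_one, Complex.norm_real, Real.norm_eq_abs]
  linarith [habs]
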